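/- Acceptability of an assumption under the preferred semantics is an implicative property in frameworks with at least 4 assumptions: with base rules R = {contrary(C) ← A, D ← A}, witness rules R_1 = {contrary(B) ← C}, R_2 = {contrary(A) ← B}, R_3 = {contrary(C) ← D}, the assumption B belongs to some preferred extension of the framework with rule set R ∪ S for every S ⊆ {R_1, R_2, R_3} except S = {R_1, R_2}, in which case B belongs to no preferred extension. -/
import Mathlib


/-- A Bipolar ABA rule `head ← body` (body is a single assumption). -/
structure ABARule (S : Type) where
  head : S
  body : S

/-- `Derives R a b`: there is a deduction (chain of rules in `R`) from `a` to `b`. -/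
def Derives {S : Type} (R : Set (ABARule S)) : S → S → Prop :=
  Relation.ReflTransGen fun a b => (⟨b, a⟩ : ABARule S) ∈ R

/-- `Δ` attacks `β` iff the contrary of `β` is deducible from some member of `Δ`. -/
def Attacks {S : Type} (co : S → S) (R : Set (ABARule S)) (Delta : Set S) (b : S) : Prop :=
  ∃ a ∈ Delta, Derives R a (co b)

/-- `Δ` attacks set `B` iff it attacks some member of `B`. -/
def AttacksSet {S : Type} (co : S → S) (R : Set (ABARule S)) (Delta B : Set S) : Prop :=
  ∃ b ∈ B, Attacks co R Delta b

/-- `Δ` is conflict-free iff it does not attack itself. -/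
def ConflictFree {S : Type} (co : S → S) (R : Set (ABARule S)) (Delta : Set S) : Prop :=
  ¬ AttacksSet co R Delta Delta

/-- Deductive closure of `Δ` within the assumptions `asm`. -/
def Cl {S : Type} (asm : Set S) (R : Set (ABARule S)) (Delta : Set S) : Set S :=
  {a | a ∈ asm ∧ ∃ d ∈ Delta, Derives R d a}

/-- `Δ` is closed iff `Δ = Cl(Δ)`. -/
def BABAClosed {S : Type} (asm : Set S) (R : Set (ABARule S)) (Delta : Set S) : Prop :=
  Cl asm R Delta = Delta

/-- Admissibility: closed, conflict-free, and counter-attacks every closed attacker. -/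
def Admissible {S : Type} (asm : Set S) (co : S → S) (R : Set (ABARule S))
    (Delta : Set S) : Prop :=
  Delta ⊆ asm ∧ BABAClosed asm R Delta ∧ ConflictFree co R Delta ∧
    ∀ B ⊆ asm, BABAClosed asm R B → AttacksSet co R B Delta → AttacksSet co R Delta B

/-- Preferred: ⊆-maximally admissible. -/
def Preferred {S : Type} (asm : Set S) (co : S → S) (R : Set (ABARule S))
    (Delta : Set S) : Prop :=
  Admissible asm co R Delta ∧
    ∀ D', Admissible asm co R D' → Delta ⊆ D' → D' = Delta

/-- `Δ` defends `α` iff `Δ` attacks every closed set attacking `α`. -/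
def Defends {S : Type} (asm : Set S) (co : S → S) (R : Set (ABARule S))
    (Delta : Set S) (a : S) : Prop :=
  ∀ B ⊆ asm, BABAClosed asm R B → Attacks co R B a → AttacksSet co R Delta B

/-- Complete: admissible and containing exactly the assumptions it defends. -/
def CompleteExt {S : Type} (asm : Set S) (co : S → S) (R : Set (ABARule S))
    (Delta : Set S) : Prop :=
  Admissible asm co R Delta ∧ Delta = {a | a ∈ asm ∧ Defends asm co R Delta a}

/-- Set-stable: closed, conflict-free, attacking `Cl({β})` for every `β` outside. -/
def SetStable {S : Type} (asm : Set S) (co : S → S) (R : Set (ABARule S))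
    (Delta : Set S) : Prop :=
  Delta ⊆ asm ∧ BABAClosed asm R Delta ∧ ConflictFree co R Delta ∧
    ∀ b ∈ asm, b ∉ Delta → AttacksSet co R Delta (Cl asm R {b})

/-- Well-founded extension: the intersection of all complete extensions. -/
def WellFoundedExt {S : Type} (asm : Set S) (co : S → S) (R : Set (ABARule S))
    (Delta : Set S) : Prop :=
  Delta = ⋂₀ {B | CompleteExt asm co R B}

/-- Ideal: ⊆-maximal among admissible sets contained in all preferred extensions. -/
def IdealExt {S : Type} (asm : Set S) (co : S → S) (R : Set (ABARule S))
    (Delta : Set S) : Prop :=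
  (Admissible asm co R Delta ∧ ∀ B, Preferred asm co R B → Delta ⊆ B) ∧
    ∀ D', (Admissible asm co R D' ∧ ∀ B, Preferred asm co R B → D' ⊆ B) →
      Delta ⊆ D' → D' = Delta

/-- Quota rule: keep the rules accepted by at least `q` agents. -/
def QuotaAgg {S : Type} {n : ℕ} (Rs : Fin n → Set (ABARule S)) (q : ℕ) :
    Set (ABARule S) :=
  {r | ∃ N' : Finset (Fin n), q ≤ N'.card ∧ ∀ i ∈ N', r ∈ Rs i}

/-- Oligarchic rule: keep the rules accepted by all veto agents. -/
def OligAgg {S : Type} {n : ℕ} (Rs : Fin n → Set (ABARule S)) (Nv : Set (Fin n)) :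
    Set (ABARule S) :=
  {r | ∀ j ∈ Nv, r ∈ Rs j}

abbrev Sen4 := Fin 4 ⊕ Fin 4

def cmap4 : Sen4 → Sen4
  | .inl i => .inr i
  | .inr i => .inr i

def asm4 : Set Sen4 := Set.range Sum.inl

def R10 : Set (ABARule Sen4) := {⟨.inr 2, .inl 0⟩, ⟨.inl 3, .inl 0⟩}

def r10a : ABARule Sen4 := ⟨.inr 1, .inl 2⟩
def r10b : ABARule Sen4 := ⟨.inr 0, .inl 1⟩
def r10c : ABARule Sen4 := ⟨.inr 2, .inl 3⟩

section Helpers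

variable {T : Set (ABARule Sen4)}

lemma mem_R_cases (hT : T ⊆ ({r10a, r10b, r10c} : Set (ABARule Sen4)))
    {y x : Sen4} (h : (⟨y, x⟩ : ABARule Sen4) ∈ R10 ∪ T) :
    (x = .inl 0 ∧ y = .inr 2) ∨ (x = .inl 0 ∧ y = .inl 3) ∨
    (x = .inl 2 ∧ y = .inr 1 ∧ r10a ∈ T) ∨
    (x = .inl 1 ∧ y = .inr 0 ∧ r10b ∈ T) ∨
    (x = .inl 3 ∧ y = .inr 2 ∧ r10c ∈ T) := by
  rcases h with h | h
  · simp only [R10, Set.mem_insert_iff, Set.mem_singleton_iff, ABARule.mk.injEq] at h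
    tauto
  · have h2 := hT h
    simp only [Set.mem_insert_iff, Set.mem_singleton_iff] at h2
    rcases h2 with h2 | h2 | h2 <;>
      simp only [r10a, r10b, r10c, ABARule.mk.injEq] at h2 <;>
      [exact Or.inr (Or.inr (Or.inl ⟨h2.2, h2.1, by rwa [show r10a = ⟨y,x⟩ from by simp [r10a, h2.1, h2.2]]⟩));
       exact Or.inr (Or.inr (Or.inr (Or.inl ⟨h2.2, h2.1, by rwa [show r10b = ⟨y,x⟩ from by simp [r10b, h2.1, h2.2]]⟩)));
       exact Or.inr (Or.inr (Or.inr (Or.inr ⟨h2.2, h2.1, by rwa [show r10c = ⟨y,x⟩ from by simp [r10c, h2.1, h2.2]]⟩)))]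

lemma derives_char (hT : T ⊆ ({r10a, r10b, r10c} : Set (ABARule Sen4)))
    (x y : Sen4) :
    Derives (R10 ∪ T) x y ↔ x = y ∨ (⟨y, x⟩ : ABARule Sen4) ∈ R10 ∪ T := by
  constructor
  · intro h
    induction h using Relation.ReflTransGen.head_induction_on with
    | refl => exact Or.inl rfl
    | head hstep _ ih =>
      rename_i a c _
      rcases ih with rfl | hyc
      · exact Or.inr hstep
      · rcases mem_R_cases hT hstep with ⟨rfl, rfl⟩ | ⟨rfl, rfl⟩ | ⟨rfl, rfl, _⟩ | ⟨rfl, rfl, _⟩ | ⟨rfl, rfl, _⟩ <;>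
        rcases mem_R_cases hT hyc with ⟨h1, rfl⟩ | ⟨h1, rfl⟩ | ⟨h1, rfl, _⟩ | ⟨h1, rfl, _⟩ | ⟨h1, rfl, _⟩ <;>
        simp_all <;>
        exact Or.inl (Set.mem_insert _ _)
  · rintro (rfl | h)
    · exact Relation.ReflTransGen.refl
    · exact Relation.ReflTransGen.single h

end Helpers
section Cases

variable {T : Set (ABARule Sen4)}

lemma closed_of (hT : T ⊆ ({r10a, r10b, r10c} : Set (ABARule Sen4)))
    {Δ : Set Sen4} (hsub : Δ ⊆ asm4) (h03 : Sum.inl 0 ∈ Δ → Sum.inl 3 ∈ Δ) :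
    BABAClosed asm4 (R10 ∪ T) Δ := by
  ext a
  constructor
  · rintro ⟨hasm, d, hd, hder⟩
    rcases (derives_char hT d a).1 hder with rfl | hmem
    · exact hd
    · obtain ⟨i, rfl⟩ := hasm
      rcases mem_R_cases hT hmem with ⟨rfl, h2⟩ | ⟨rfl, h2⟩ | ⟨rfl, h2, _⟩ | ⟨rfl, h2, _⟩ | ⟨rfl, h2, _⟩ <;>
        simp_all
  · intro haΔ
    exact ⟨hsub haΔ, a, haΔ, Relation.ReflTransGen.refl⟩

lemma attacks_inv (hT : T ⊆ ({r10a, r10b, r10c} : Set (ABARule Sen4)))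
    {Δ : Set Sen4} (hsub : Δ ⊆ asm4) {i : Fin 4}
    (h : ∃ a ∈ Δ, Derives (R10 ∪ T) a (.inr i)) :
    (i = 2 ∧ (Sum.inl 0 ∈ Δ ∨ (Sum.inl 3 ∈ Δ ∧ r10c ∈ T))) ∨
    (i = 1 ∧ Sum.inl 2 ∈ Δ ∧ r10a ∈ T) ∨
    (i = 0 ∧ Sum.inl 1 ∈ Δ ∧ r10b ∈ T) := by
  obtain ⟨a, haΔ, hd⟩ := h
  have hasm := hsub haΔ
  obtain ⟨j, rfl⟩ := hasm
  rcases (derives_char hT _ _).1 hd with h' | hmem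
  · simp at h'
  · rcases mem_R_cases hT hmem with ⟨h1, h2⟩ | ⟨h1, h2⟩ | ⟨h1, h2, h3⟩ | ⟨h1, h2, h3⟩ | ⟨h1, h2, h3⟩ <;>
      simp_all <;> tauto

lemma mem_R_Ac : (⟨.inr 2, .inl 0⟩ : ABARule Sen4) ∈ R10 ∪ T :=
  Or.inl (by simp [R10])

lemma der_of_mem {x y : Sen4} (h : (⟨y, x⟩ : ABARule Sen4) ∈ R10 ∪ T) :
    Derives (R10 ∪ T) x y := Relation.ReflTransGen.single h

end Cases
section Prefs

variable {T : Set (ABARule Sen4)}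

lemma pref_D1 (hT : T ⊆ ({r10a, r10b, r10c} : Set (ABARule Sen4))) (hnb : r10b ∉ T) :
    Preferred asm4 cmap4 (R10 ∪ T) ({.inl 0, .inl 1, .inl 3} : Set Sen4) := by
  have hsub : ({.inl 0, .inl 1, .inl 3} : Set Sen4) ⊆ asm4 := by
    rintro x (rfl | rfl | rfl) <;> simp [asm4]
  refine ⟨⟨hsub, closed_of hT hsub (by simp), ?_, ?_⟩, ?_⟩
  · rintro ⟨b, hbmem, hatt⟩
    rcases hbmem with rfl | rfl | rfl <;> simp only [Attacks, cmap4] at hatt <;>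
      have := attacks_inv hT hsub hatt <;> simp_all
  · intro B hBsub _ hatt
    obtain ⟨b, hbΔ, a, haB, hder⟩ := hatt
    have h2 : Sum.inl 2 ∈ B := by
      rcases hbΔ with rfl | rfl | rfl <;> simp only [cmap4] at hder <;>
        have := attacks_inv hT hBsub ⟨a, haB, hder⟩ <;> simp_all
    exact ⟨Sum.inl 2, h2, Sum.inl 0, by simp, by
      simpa [cmap4] using der_of_mem (mem_R_Ac (T := T))⟩
  · intro D' hadm hss
    refine Set.eq_of_subset_of_subset ?_ hss
    intro x hx
    obtain ⟨i, rfl⟩ := hadm.1 hx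
    fin_cases i
    · simp
    · simp
    · exfalso
      exact hadm.2.2.1 ⟨Sum.inl 2, hx, Sum.inl 0, hss (by simp), by
        simpa [cmap4] using der_of_mem (mem_R_Ac (T := T))⟩
    · simp

lemma pref_D2 (hT : T ⊆ ({r10a, r10b, r10c} : Set (ABARule Sen4)))
    (hb : r10b ∈ T) (hc : r10c ∈ T) :
    Preferred asm4 cmap4 (R10 ∪ T) ({.inl 1, .inl 3} : Set Sen4) := by
  have hsub : ({.inl 1, .inl 3} : Set Sen4) ⊆ asm4 := by
    rintro x (rfl | rfl) <;> simp [asm4]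
  refine ⟨⟨hsub, closed_of hT hsub (by simp), ?_, ?_⟩, ?_⟩
  · rintro ⟨b, hbmem, hatt⟩
    rcases hbmem with rfl | rfl <;> simp only [Attacks, cmap4] at hatt <;>
      have := attacks_inv hT hsub hatt <;> simp_all
  · intro B hBsub _ hatt
    obtain ⟨b, hbΔ, a, haB, hder⟩ := hatt
    have h2 : Sum.inl 2 ∈ B := by
      rcases hbΔ with rfl | rfl <;> simp only [cmap4] at hder <;>
        have := attacks_inv hT hBsub ⟨a, haB, hder⟩ <;> simp_all
    exact ⟨Sum.inl 2, h2, Sum.inl 3, by simp, by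
      simpa [cmap4] using der_of_mem (Or.inr hc)⟩
  · intro D' hadm hss
    refine Set.eq_of_subset_of_subset ?_ hss
    intro x hx
    obtain ⟨i, rfl⟩ := hadm.1 hx
    fin_cases i
    · exfalso
      exact hadm.2.2.1 ⟨Sum.inl 0, hx, Sum.inl 1, hss (by simp), by
        simpa [cmap4] using der_of_mem (Or.inr hb)⟩
    · simp
    · exfalso
      exact hadm.2.2.1 ⟨Sum.inl 2, hx, Sum.inl 3, hss (by simp), by
        simpa [cmap4] using der_of_mem (Or.inr hc)⟩
    · simp

lemma pref_D3 (hT : T ⊆ ({r10a, r10b, r10c} : Set (ABARule Sen4)))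
    (hna : r10a ∉ T) (hb : r10b ∈ T) (hnc : r10c ∉ T) :
    Preferred asm4 cmap4 (R10 ∪ T) ({.inl 1, .inl 2, .inl 3} : Set Sen4) := by
  have hsub : ({.inl 1, .inl 2, .inl 3} : Set Sen4) ⊆ asm4 := by
    rintro x (rfl | rfl | rfl) <;> simp [asm4]
  refine ⟨⟨hsub, closed_of hT hsub (by simp), ?_, ?_⟩, ?_⟩
  · rintro ⟨b, hbmem, hatt⟩
    rcases hbmem with rfl | rfl | rfl <;> simp only [Attacks, cmap4] at hatt <;>
      have := attacks_inv hT hsub hatt <;> simp_all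
  · intro B hBsub _ hatt
    obtain ⟨b, hbΔ, a, haB, hder⟩ := hatt
    have h0 : Sum.inl 0 ∈ B := by
      rcases hbΔ with rfl | rfl | rfl <;> simp only [cmap4] at hder <;>
        have := attacks_inv hT hBsub ⟨a, haB, hder⟩ <;> simp_all
    exact ⟨Sum.inl 0, h0, Sum.inl 1, by simp, by
      simpa [cmap4] using der_of_mem (Or.inr hb)⟩
  · intro D' hadm hss
    refine Set.eq_of_subset_of_subset ?_ hss
    intro x hx
    obtain ⟨i, rfl⟩ := hadm.1 hx
    fin_cases i
    · exfalso
      exact hadm.2.2.1 ⟨Sum.inl 0, hx, Sum.inl 1, hss (by simp), by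
        simpa [cmap4] using der_of_mem (Or.inr hb)⟩
    · simp
    · simp
    · simp

lemma not_acc (hT : T ⊆ ({r10a, r10b, r10c} : Set (ABARule Sen4)))
    (ha : r10a ∈ T) (hb : r10b ∈ T) (hnc : r10c ∉ T)
    (Δ : Set Sen4) (hadm : Admissible asm4 cmap4 (R10 ∪ T) Δ) :
    (Sum.inl 1 : Sen4) ∉ Δ := by
  intro hBΔ
  obtain ⟨hsub, hcl, hcf, hdef⟩ := hadm
  have hCsub : ({Sum.inl 2} : Set Sen4) ⊆ asm4 := by rintro x rfl; simp [asm4]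
  have hCcl : BABAClosed asm4 (R10 ∪ T) ({Sum.inl 2} : Set Sen4) :=
    closed_of hT hCsub (by simp)
  have hattack : AttacksSet cmap4 (R10 ∪ T) ({Sum.inl 2} : Set Sen4) Δ :=
    ⟨Sum.inl 1, hBΔ, Sum.inl 2, rfl, by
      simpa [cmap4] using der_of_mem (Or.inr ha)⟩
  have hcounter := hdef _ hCsub hCcl hattack
  obtain ⟨b, hbmem, hatt⟩ := hcounter
  rcases hbmem with rfl
  simp only [Attacks, cmap4] at hatt
  have h0 : Sum.inl 0 ∈ Δ := by
    have := attacks_inv hT hsub hatt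
    simp_all
  exact hcf ⟨Sum.inl 0, h0, Sum.inl 1, hBΔ, by
    simpa [cmap4] using der_of_mem (Or.inr hb)⟩

end Prefs
theorem preferredAcceptability_implicative :
    ∀ T ⊆ ({r10a, r10b, r10c} : Set (ABARule Sen4)),
      (T ≠ {r10a, r10b} →
        ∃ Delta, Preferred asm4 cmap4 (R10 ∪ T) Delta ∧ (Sum.inl 1 : Sen4) ∈ Delta) ∧
      (T = {r10a, r10b} →
        ∀ Delta, Preferred asm4 cmap4 (R10 ∪ T) Delta → (Sum.inl 1 : Sen4) ∉ Delta) := by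
  intro T hT
  constructor
  · intro hne
    by_cases hb : r10b ∈ T
    · by_cases hc : r10c ∈ T
      · exact ⟨_, pref_D2 hT hb hc, by simp⟩
      · by_cases ha : r10a ∈ T
        · exfalso
          apply hne
          ext r
          constructor
          · intro hr
            have h2 := hT hr
            simp only [Set.mem_insert_iff, Set.mem_singleton_iff] at h2 ⊢
            rcases h2 with rfl | rfl | rfl
            · exact Or.inl rfl
            · exact Or.inr rfl
            · exact absurd hr hc
          · intro hr
            simp only [Set.mem_insert_iff, Set.mem_singleton_iff] at hr
            rcases hr with rfl | rfl
            · exact ha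
            · exact hb
        · exact ⟨_, pref_D3 hT ha hb hc, by simp⟩
    · exact ⟨_, pref_D1 hT hb, by simp⟩
  · intro hTeq Delta hpref
    subst hTeq
    refine not_acc ?_ (by simp) (by simp) ?_ Delta hpref.1
    · intro r hr
      simp only [Set.mem_insert_iff, Set.mem_singleton_iff] at hr ⊢
      tauto
    · simp only [Set.mem_insert_iff, Set.mem_singleton_iff, r10a, r10b, r10c,
        ABARule.mk.injEq]
      simp
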